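/- arXiv:1802.09733 — 2 statements merged into one kernel-verified Lean document; each statement's English description precedes it below -/
import Mathlib

section
/- Let Ω be a norm on ℝ^p that is weakly decomposable for a subset S ⊆ {1,…,p} with companion norm Ω^{S^c}. Then for all β, β′ ∈ ℝ^p one has the triangle property: Ω(β) − Ω(β′) ≤ Ω(β_S − β′_S) + Ω(β_{S^c}) − Ω^{S^c}(β′_{S^c}). -/
open Finset

/-- `restr S b` is the vector `b_S`: coordinates in `S` kept, others set to `0`. -/
def restr {p : ℕ} (S : Finset (Fin p)) (b : Fin p → ℝ) : Fin p → ℝ :=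
  fun j => if j ∈ S then b j else 0

/-- **Triangle property of weakly decomposable norms** (Lemma 1).
If the norm `Om` on `ℝ^p` is weakly decomposable for `S` with companion norm `Omc`
(a norm on the coordinates indexed by `Sᶜ`), then for all `β, β'`,
`Om β − Om β' ≤ Om (β_S − β'_S) + Om (β_{Sᶜ}) − Omc (β'_{Sᶜ})`. -/
theorem triangle_property_of_weakly_decomposable {p : ℕ}
    (Om Omc : (Fin p → ℝ) → ℝ) (S : Finset (Fin p))
    -- `Om` is a norm on `ℝ^p`
    (hOm_nonneg : ∀ b, 0 ≤ Om b)
    (hOm_tri : ∀ a b, Om (a + b) ≤ Om a + Om b)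
    (hOm_smul : ∀ (c : ℝ) b, Om (c • b) = |c| * Om b)
    (hOm_definite : ∀ b, Om b = 0 → b = 0)
    -- `Omc` is a norm on the coordinates indexed by `Sᶜ`
    (hOmc_nonneg : ∀ b, restr Sᶜ b = b → 0 ≤ Omc b)
    (hOmc_tri : ∀ a b, restr Sᶜ a = a → restr Sᶜ b = b → Omc (a + b) ≤ Omc a + Omc b)
    (hOmc_smul : ∀ (c : ℝ) b, restr Sᶜ b = b → Omc (c • b) = |c| * Omc b)
    (hOmc_definite : ∀ b, restr Sᶜ b = b → Omc b = 0 → b = 0)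
    -- weak decomposability
    (hweak : ∀ b : Fin p → ℝ, Om (restr S b) + Omc (restr Sᶜ b) ≤ Om b)
    (β β' : Fin p → ℝ) :
    Om β - Om β' ≤ Om (restr S β - restr S β') + Om (restr Sᶜ β) - Omc (restr Sᶜ β') := by
  have hsplit : ∀ b : Fin p → ℝ, b = restr S b + restr Sᶜ b := by
    intro b; funext j
    by_cases h : j ∈ S <;> simp [restr, h]
  have h1 : Om β ≤ Om (restr S β - restr S β') + Om (restr S β') + Om (restr Sᶜ β) := by
    calc Om β = Om ((restr S β - restr S β' + restr S β') + restr Sᶜ β) := by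
          rw [sub_add_cancel, ← hsplit]
      _ ≤ Om (restr S β - restr S β' + restr S β') + Om (restr Sᶜ β) := hOm_tri _ _
      _ ≤ Om (restr S β - restr S β') + Om (restr S β') + Om (restr Sᶜ β) := by
          exact add_le_add_left (hOm_tri _ _) _
  have h2 := hweak β'
  linarith
end

section
/- Weak decomposability of the sorted ℓ₁-norm: let λ₁ ≥ λ₂ ≥ … ≥ λ_p ≥ 0 with λ₁ > 0 and let J_λ be the sorted ℓ₁-norm. Then for every β ∈ ℝ^p and every S ⊆ {1,…,p} with |S| = s and r = p − s: J_λ(β) ≥ Σ_{j=1}^s λ_j·|β_S|_{(j)} + Σ_{l=1}^r λ_{p−r+l}·|β_{S^c}|_{(l)}, where |β_S|_{(1)} ≥ … ≥ |β_S|_{(s)} is the decreasing rearrangement of the absolute values of the entries of β indexed by S, and |β_{S^c}|_{(1)} ≥ … ≥ |β_{S^c}|_{(r)} that of the entries indexed by S^c. -/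
open Finset

/-- `sortedAbs b j` is the `(j+1)`-st largest absolute value `|b|_{(j+1)}` among the entries
of `b` (the decreasing rearrangement of the absolute values of the entries of `b`). -/
noncomputable def sortedAbs {p : ℕ} (b : Fin p → ℝ) : Fin p → ℝ :=
  fun j => |b (Tuple.sort (fun i => -|b i|) j)|

lemma antitone_comp_sort_neg {n : ℕ} (f : Fin n → ℝ) :
    Antitone (f ∘ Tuple.sort (fun i => -f i)) := by
  intro i j hij
  have h := Tuple.monotone_sort (fun i => -f i) hij
  simp only [Function.comp_apply] at h ⊢
  linarith

lemma sortedAbs_eq_comp {p : ℕ} (b : Fin p → ℝ) :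
    sortedAbs b = (fun i => |b i|) ∘ Tuple.sort (fun i => -|b i|) := rfl

lemma sortedAbs_antitone {p : ℕ} (b : Fin p → ℝ) : Antitone (sortedAbs b) := by
  rw [sortedAbs_eq_comp]
  exact antitone_comp_sort_neg (fun i => |b i|)

lemma multiset_map_perm {n : ℕ} {α : Type*} (σ : Equiv.Perm (Fin n)) (f : Fin n → α) :
    Multiset.map (f ∘ σ) Finset.univ.val = Multiset.map f Finset.univ.val := by
  conv_rhs => rw [← Finset.map_univ_equiv σ]
  rw [Finset.map_val, Multiset.map_map]
  rfl

lemma sortedAbs_multiset {p : ℕ} (b : Fin p → ℝ) :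
    Multiset.map (sortedAbs b) Finset.univ.val
      = Multiset.map (fun i => |b i|) Finset.univ.val := by
  rw [sortedAbs_eq_comp]
  exact multiset_map_perm _ _

lemma antitone_eq_of_multiset_map_eq {n : ℕ} {f g : Fin n → ℝ} (hf : Antitone f)
    (hg : Antitone g)
    (h : Multiset.map f Finset.univ.val = Multiset.map g Finset.univ.val) : f = g := by
  rw [Fin.univ_val_map, Fin.univ_val_map] at h
  have hperm : List.Perm (List.ofFn f) (List.ofFn g) := Multiset.coe_eq_coe.mp h
  have hneg : List.Perm (List.ofFn (Neg.neg ∘ f)) (List.ofFn (Neg.neg ∘ g)) := by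
    rw [← List.map_ofFn, ← List.map_ofFn]
    exact hperm.map _
  have h1 : Monotone (Neg.neg ∘ f) := fun i j hij => neg_le_neg (hf hij)
  have h2 : Monotone (Neg.neg ∘ g) := fun i j hij => neg_le_neg (hg hij)
  have heq := List.ofFn_injective (List.Perm.eq_of_sortedLE h1.sortedLE_ofFn h2.sortedLE_ofFn hneg)
  funext i
  have := congrFun heq i
  simp only [Function.comp_apply] at this
  linarith

lemma sortedAbs_restr_eq_zero {p : ℕ} (S : Finset (Fin p)) (b : Fin p → ℝ) (j : Fin p)
    (hj : S.card ≤ (j : ℕ)) : sortedAbs (restr S b) j = 0 := by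
  by_contra hne
  have hant : Antitone (sortedAbs (restr S b)) := sortedAbs_antitone _
  have hpos : 0 < sortedAbs (restr S b) j := lt_of_le_of_ne (abs_nonneg _) (Ne.symm hne)
  have hsub : Finset.Iic j ⊆ univ.filter fun k => sortedAbs (restr S b) k ≠ 0 := by
    intro k hk
    simp only [mem_filter, mem_univ, true_and]
    have hle : sortedAbs (restr S b) j ≤ sortedAbs (restr S b) k :=
      hant (Finset.mem_Iic.mp hk)
    exact ne_of_gt (lt_of_lt_of_le hpos hle)
  have hcard1 : (j : ℕ) + 1 ≤ (univ.filter fun k => sortedAbs (restr S b) k ≠ 0).card := by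
    have := Finset.card_le_card hsub
    rwa [Fin.card_Iic] at this
  have hcard2 : (univ.filter fun k => sortedAbs (restr S b) k ≠ 0).card ≤ S.card := by
    apply Finset.card_le_card_of_injOn (fun k => Tuple.sort (fun i => -|restr S b i|) k)
    · intro k hk
      simp only [Finset.mem_coe, mem_filter, mem_univ, true_and] at hk ⊢
      by_contra hmem
      apply hk
      show |restr S b (Tuple.sort (fun i => -|restr S b i|) k)| = 0
      have h0 : restr S b ((Tuple.sort fun i => -|restr S b i|) k) = 0 := if_neg hmem
      rw [h0, abs_zero]
    · exact (Equiv.injective _).injOn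
  omega

lemma card_filter_lt {p s : ℕ} (hs : s ≤ p) :
    (univ.filter fun j : Fin p => (j : ℕ) < s).card = s := by
  have himg : (univ.filter fun j : Fin p => (j : ℕ) < s) = univ.image (Fin.castLE hs) := by
    ext k
    rw [mem_filter, mem_image]
    constructor
    · intro hk
      exact ⟨⟨(k : ℕ), hk.2⟩, mem_univ _, Fin.ext rfl⟩
    · rintro ⟨x, -, rfl⟩
      exact ⟨mem_univ _, x.isLt⟩
  rw [himg, Finset.card_image_of_injective _ (Fin.castLE_injective hs), card_univ,
    Fintype.card_fin]

lemma univ_val_split {p : ℕ} (T : Finset (Fin p)) :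
    T.val + Tᶜ.val = (univ : Finset (Fin p)).val := by
  rw [Finset.compl_eq_univ_sdiff, Finset.sdiff_val, add_comm]
  exact tsub_add_cancel_of_le (Finset.val_le_iff.mpr (Finset.subset_univ T))

lemma map_split {p : ℕ} {α : Type*} (T : Finset (Fin p)) (f : Fin p → α) :
    Multiset.map f (univ : Finset (Fin p)).val
      = Multiset.map f T.val + Multiset.map f Tᶜ.val := by
  rw [← Multiset.map_add, univ_val_split]

lemma top_multiset {p : ℕ} (S : Finset (Fin p)) (b : Fin p → ℝ) :
    Multiset.map (sortedAbs (restr S b)) (univ.filter fun j : Fin p => (j : ℕ) < S.card).val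
      = Multiset.map (fun i => |b i|) S.val := by
  have hs : S.card ≤ p := by simpa using Finset.card_le_univ S
  have h1 : Multiset.map (sortedAbs (restr S b)) Finset.univ.val
      = Multiset.map (fun i => |restr S b i|) Finset.univ.val := sortedAbs_multiset _
  have h2 : Multiset.map (fun i => |restr S b i|) Finset.univ.val
      = Multiset.map (fun i => |b i|) S.val + Multiset.replicate (p - S.card) 0 := by
    rw [map_split S]
    congr 1
    · exact Multiset.map_congr rfl fun x hx => by
        rw [Finset.mem_val] at hx
        simp [restr, hx]
    · rw [Multiset.eq_replicate]
      refine ⟨?_, ?_⟩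
      · rw [Multiset.card_map]
        show Sᶜ.card = p - S.card
        rw [Finset.card_compl, Fintype.card_fin]
      · intro x hx
        obtain ⟨i, hi, rfl⟩ := Multiset.mem_map.mp hx
        rw [Finset.mem_val, Finset.mem_compl] at hi
        simp [restr, hi]
  have h3 : Multiset.map (sortedAbs (restr S b)) Finset.univ.val
      = Multiset.map (sortedAbs (restr S b))
          (univ.filter fun j : Fin p => (j : ℕ) < S.card).val
        + Multiset.replicate (p - S.card) 0 := by
    rw [map_split (univ.filter fun j : Fin p => (j : ℕ) < S.card)]
    congr 1
    rw [Multiset.eq_replicate]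
    refine ⟨?_, ?_⟩
    · rw [Multiset.card_map]
      show (univ.filter fun j : Fin p => (j : ℕ) < S.card)ᶜ.card = p - S.card
      rw [Finset.card_compl, Fintype.card_fin, card_filter_lt hs]
    · intro x hx
      obtain ⟨i, hi, rfl⟩ := Multiset.mem_map.mp hx
      rw [Finset.mem_val, Finset.mem_compl, mem_filter] at hi
      push_neg at hi
      exact sortedAbs_restr_eq_zero S b i (hi (mem_univ i))
  exact add_right_cancel (h3.symm.trans (h1.trans h2))

/-- **Weak decomposability of the sorted ℓ₁-norm** (Lemma 10).
With weights `λ₁ ≥ … ≥ λ_p ≥ 0`, `λ₁ > 0` (here `lam k` is `λ_{k+1}`), the sorted ℓ₁-norm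
`J_λ(β) = ∑_{j=1}^p λ_j |β|_{(j)}` satisfies, for any `S` with `|S| = s` and `r = p − s`,
`J_λ(β) ≥ ∑_{j=1}^s λ_j |β_S|_{(j)} + ∑_{l=1}^r λ_{p−r+l} |β_{Sᶜ}|_{(l)}`. -/
theorem sorted_l1_weakly_decomposable {p : ℕ} (lam : ℕ → ℝ)
    (hmono : ∀ i j : ℕ, i ≤ j → j < p → lam j ≤ lam i)
    (hnonneg : ∀ j : ℕ, j < p → 0 ≤ lam j)
    (hpos : 0 < lam 0)
    (β : Fin p → ℝ) (S : Finset (Fin p)) :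
    (∑ j : Fin p, if (j : ℕ) < S.card then lam (j : ℕ) * sortedAbs (restr S β) j else 0)
      + (∑ j : Fin p, if (j : ℕ) < p - S.card
          then lam (S.card + (j : ℕ)) * sortedAbs (restr Sᶜ β) j else 0)
      ≤ ∑ j : Fin p, lam (j : ℕ) * sortedAbs β j := by
  classical
  have hsp : S.card ≤ p := by simpa using Finset.card_le_univ S
  set s := S.card with hs
  set A := sortedAbs (restr S β) with hA
  set B := sortedAbs (restr Sᶜ β) with hB
  set T : Finset (Fin p) := univ.filter (fun j : Fin p => (j : ℕ) < s) with hT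
  set T' : Finset (Fin p) := univ.filter (fun j : Fin p => (j : ℕ) < p - s) with hT'
  set C : Fin p → ℝ := fun j =>
    if (j : ℕ) < s then A j else B ⟨(j : ℕ) - s, Nat.lt_of_le_of_lt (Nat.sub_le _ _) j.isLt⟩
    with hC
  have hr : Sᶜ.card = p - s := by rw [Finset.card_compl, Fintype.card_fin]
  -- multiset of C equals multiset of |β|
  have hmulC : Multiset.map C Finset.univ.val
      = Multiset.map (fun i => |β i|) Finset.univ.val := by
    rw [map_split T, map_split S]
    congr 1
    · -- on T, C = A
      have e0 : Multiset.map C T.val = Multiset.map A T.val :=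
        Multiset.map_congr rfl fun x hx => by
          rw [Finset.mem_val, hT, mem_filter] at hx
          simp only [hC, if_pos hx.2]
      rw [e0]
      exact top_multiset S β
    · -- on Tᶜ, C = B ∘ shift
      set shift : Fin p → Fin p :=
        fun j => ⟨(j : ℕ) - s, Nat.lt_of_le_of_lt (Nat.sub_le _ _) j.isLt⟩ with hshift
      have e1 : Multiset.map C Tᶜ.val = Multiset.map (B ∘ shift) Tᶜ.val :=
        Multiset.map_congr rfl fun x hx => by
          rw [Finset.mem_val, Finset.mem_compl, hT, mem_filter] at hx
          push_neg at hx
          have hxs : ¬ (x : ℕ) < s := not_lt.mpr (hx (mem_univ x))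
          simp only [hC, if_neg hxs, hshift, Function.comp_apply]
      have e2 : Multiset.map shift Tᶜ.val = T'.val := by
        have himg : Tᶜ.image shift = T' := by
          ext k
          constructor
          · intro hk
            obtain ⟨x, hx, hxk⟩ := mem_image.mp hk
            rw [Finset.mem_compl, hT, mem_filter] at hx
            push_neg at hx
            have hxs : s ≤ (x : ℕ) := hx (mem_univ x)
            rw [hT', mem_filter]
            refine ⟨mem_univ _, ?_⟩
            have hv := congrArg Fin.val hxk
            simp only [hshift] at hv
            have := x.isLt
            omega
          · intro hk
            rw [hT', mem_filter] at hk
            have hkr : (k : ℕ) < p - s := hk.2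
            refine mem_image.mpr ⟨⟨(k : ℕ) + s, by omega⟩, ?_, ?_⟩
            · rw [Finset.mem_compl, hT, mem_filter]
              push_neg
              intro _
              simp only [not_lt]
              omega
            · simp only [hshift]
              exact Fin.ext (by simp)
        have hinj : Set.InjOn shift (Tᶜ : Finset (Fin p)) := by
          intro x hx y hy hxy
          rw [Finset.mem_coe, Finset.mem_compl, hT, mem_filter] at hx hy
          push_neg at hx hy
          have hxs : s ≤ (x : ℕ) := hx (mem_univ x)
          have hys : s ≤ (y : ℕ) := hy (mem_univ y)
          have hv := congrArg Fin.val hxy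
          simp only [hshift] at hv
          exact Fin.ext (by omega)
        rw [← Finset.image_val_of_injOn hinj, himg]
      rw [e1, ← Multiset.map_map, e2]
      have : Multiset.map B T'.val = Multiset.map (fun i => |β i|) Sᶜ.val := by
        have := top_multiset Sᶜ β
        rw [hr] at this
        exact this
      exact this
  -- the sorted rearrangement of C is sortedAbs β
  set σ : Equiv.Perm (Fin p) := Tuple.sort (fun i => -C i) with hσ
  have hDant : Antitone (C ∘ σ) := antitone_comp_sort_neg C
  have hmulD : Multiset.map (C ∘ σ) Finset.univ.val
      = Multiset.map (sortedAbs β) Finset.univ.val := by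
    rw [multiset_map_perm σ C, hmulC, ← sortedAbs_multiset β]
  have hDy : C ∘ σ = sortedAbs β :=
    antitone_eq_of_multiset_map_eq hDant (sortedAbs_antitone β) hmulD
  have hCy : ∀ j, C j = sortedAbs β (σ.symm j) := by
    intro j
    have := congrFun hDy (σ.symm j)
    simpa using this
  -- monovariance
  have hmv : Monovary (fun j : Fin p => lam (j : ℕ)) (sortedAbs β) := by
    intro i j hij
    rcases le_total i j with h | h
    · exact absurd hij (not_lt.mpr (sortedAbs_antitone β h))
    · exact hmono (j : ℕ) (i : ℕ) (Fin.le_iff_val_le_val.mp h) i.isLt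
  -- rewrite the two sums
  have hsum1 : (∑ j : Fin p, if (j : ℕ) < s then lam (j : ℕ) * A j else 0)
      = ∑ j ∈ T, lam (j : ℕ) * C j := by
    rw [hT, Finset.sum_filter]
    apply Finset.sum_congr rfl
    intro x _
    by_cases hx : (x : ℕ) < s
    · simp only [if_pos hx, hC]
    · simp only [if_neg hx]
  have hsum2 : (∑ j : Fin p, if (j : ℕ) < p - s then lam (s + (j : ℕ)) * B j else 0)
      = ∑ j ∈ Tᶜ, lam (j : ℕ) * C j := by
    rw [show (∑ j : Fin p, if (j : ℕ) < p - s then lam (s + (j : ℕ)) * B j else 0)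
        = ∑ j ∈ T', lam (s + (j : ℕ)) * B j from (Finset.sum_filter _ _).symm]
    symm
    refine Finset.sum_bij
      (fun (b : Fin p) (_ : b ∈ Tᶜ) =>
        (⟨(b : ℕ) - s, Nat.lt_of_le_of_lt (Nat.sub_le _ _) b.isLt⟩ : Fin p)) ?_ ?_ ?_ ?_
    · intro b hb
      rw [Finset.mem_compl, hT, mem_filter] at hb
      push_neg at hb
      have hbs : s ≤ (b : ℕ) := hb (mem_univ b)
      rw [hT', mem_filter]
      refine ⟨mem_univ _, ?_⟩
      show (b : ℕ) - s < p - s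
      have := b.isLt
      omega
    · intro x hx y hy hxy
      rw [Finset.mem_compl, hT, mem_filter] at hx hy
      push_neg at hx hy
      have hxs : s ≤ (x : ℕ) := hx (mem_univ x)
      have hys : s ≤ (y : ℕ) := hy (mem_univ y)
      have hv := congrArg Fin.val hxy
      simp only at hv
      exact Fin.ext (by omega)
    · intro a ha
      rw [hT', mem_filter] at ha
      have ha2 : (a : ℕ) < p - s := ha.2
      refine ⟨⟨(a : ℕ) + s, by omega⟩, ?_, ?_⟩
      · rw [Finset.mem_compl, hT, mem_filter]
        push_neg
        intro _
        show s ≤ (a : ℕ) + s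
        omega
      · exact Fin.ext (by show (a : ℕ) + s - s = (a : ℕ); omega)
    · intro b hb
      rw [Finset.mem_compl, hT, mem_filter] at hb
      push_neg at hb
      have hbs : s ≤ (b : ℕ) := hb (mem_univ b)
      have h1 : C b = B ⟨(b : ℕ) - s, Nat.lt_of_le_of_lt (Nat.sub_le _ _) b.isLt⟩ :=
        if_neg (not_lt.mpr hbs)
      rw [h1]
      congr 2
      show (b : ℕ) = s + ((b : ℕ) - s)
      omega
  rw [hsum1, hsum2, Finset.sum_add_sum_compl T (fun j => lam (j : ℕ) * C j)]
  calc ∑ j : Fin p, lam (j : ℕ) * C j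
      = ∑ j : Fin p, lam (j : ℕ) * sortedAbs β (σ.symm j) := by
        exact Finset.sum_congr rfl fun j _ => by rw [hCy j]
    _ ≤ ∑ j : Fin p, lam (j : ℕ) * sortedAbs β j :=
        hmv.sum_mul_comp_perm_le_sum_mul (σ := σ.symm)
end
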